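/- Let n ≥ 2. The VC dimension of the hypothesis class of strict equality separators on ℝ^n — the class of Boolean-valued functions of the form x ↦ 1[w·x + b = 0] together with those of the form x ↦ 1[w·x + b ≠ 0], over all w ∈ ℝ^n and b ∈ ℝ — is exactly 2n + 1. -/

import Mathlib

/-- Dot product of two vectors in ℝⁿ. -/
noncomputable def dotp {n : ℕ} (w x : Fin n → ℝ) : ℝ := ∑ i, w i * x i

/-- The class of strict equality separators on ℝⁿ: functions of the form
`x ↦ 1[w·x + b = 0]` together with those of the form `x ↦ 1[w·x + b ≠ 0]`. -/
def strictEqSep (n : ℕ) : Set ((Fin n → ℝ) → Prop) :=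
  {h | ∃ w : Fin n → ℝ, ∃ b : ℝ,
      h = (fun x => dotp w x + b = 0) ∨ h = (fun x => dotp w x + b ≠ 0)}

/-- A hypothesis class `H` shatters a finite set `S` if every labeling of `S`
is realized by some hypothesis in `H`. -/
def Shatters {n : ℕ} (H : Set ((Fin n → ℝ) → Prop)) (S : Finset (Fin n → ℝ)) : Prop :=
  ∀ f : (Fin n → ℝ) → Prop, ∃ h ∈ H, ∀ x ∈ S, (h x ↔ f x)

open Submodule Polynomial Finset

/-- The affine functional `x ↦ w·x + b` as a linear functional on `ℝⁿ × ℝ`. -/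
noncomputable def ellmap {n : ℕ} (w : Fin n → ℝ) (b : ℝ) : ((Fin n → ℝ) × ℝ) →ₗ[ℝ] ℝ where
  toFun v := dotp w v.1 + b * v.2
  map_add' u v := by
    simp only [Prod.fst_add, Prod.snd_add, dotp, Pi.add_apply, mul_add]
    rw [Finset.sum_add_distrib]; ring
  map_smul' c v := by
    simp only [Prod.smul_fst, Prod.smul_snd, dotp, Pi.smul_apply, smul_eq_mul,
      RingHom.id_apply, mul_add, Finset.mul_sum]
    congr 1
    · exact Finset.sum_congr rfl fun i _ => by ring
    · ring

/-- The affine lift `x ↦ (x, 1)`. -/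
def Lf {n : ℕ} (x : Fin n → ℝ) : (Fin n → ℝ) × ℝ := (x, 1)

lemma Lf_inj {n : ℕ} : Function.Injective (Lf (n := n)) := by
  intro a b h
  exact congrArg Prod.fst h

lemma ell_Lf {n : ℕ} (w : Fin n → ℝ) (b : ℝ) (x : Fin n → ℝ) :
    ellmap w b (Lf x) = dotp w x + b := by
  simp [ellmap, Lf]

lemma no_shatter {n : ℕ} (S : Finset (Fin n → ℝ)) (A B : Set ((Fin n → ℝ) × ℝ))
    (hA : A ⊆ Lf '' ↑S) (hB : B ⊆ Lf '' ↑S) (hd : Disjoint A B)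
    (ha : ∃ a ∈ A, a ∈ span ℝ B) (hb : ∃ b ∈ B, b ∈ span ℝ A) :
    ¬ Shatters (strictEqSep n) S := by
  intro hS
  obtain ⟨h, hmem, hag⟩ := hS (fun x => Lf x ∈ A)
  obtain ⟨w, c, hc⟩ := hmem
  obtain ⟨a, haA, haB⟩ := ha
  obtain ⟨b, hbB, hbA⟩ := hb
  rcases hc with rfl | rfl
  · -- the hypothesis is `w·x + c = 0`; it vanishes on A, hence on span A ∋ b, contradiction
    have hker : A ⊆ (LinearMap.ker (ellmap w c) : Set _) := by
      intro v hv
      obtain ⟨x, hxS, rfl⟩ := hA hv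
      have h0 : dotp w x + c = 0 := (hag x hxS).mpr hv
      simpa [LinearMap.mem_ker, ell_Lf] using h0
    have hsp : span ℝ A ≤ LinearMap.ker (ellmap w c) := span_le.mpr hker
    obtain ⟨x, hxS, rfl⟩ := hB hbB
    have h0 : dotp w x + c = 0 := by
      have := hsp hbA
      simpa [LinearMap.mem_ker, ell_Lf] using this
    have hmemA : Lf x ∈ A := (hag x hxS).mp h0
    exact Set.disjoint_left.mp hd hmemA hbB
  · -- the hypothesis is `w·x + c ≠ 0`; it vanishes on B, hence on span B ∋ a, contradiction
    have hker : B ⊆ (LinearMap.ker (ellmap w c) : Set _) := by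
      intro v hv
      obtain ⟨x, hxS, rfl⟩ := hB hv
      have hnA : Lf x ∉ A := fun hmemA => Set.disjoint_left.mp hd hmemA hv
      have h0 : dotp w x + c = 0 := by
        by_contra hne
        exact hnA ((hag x hxS).mp hne)
      simpa [LinearMap.mem_ker, ell_Lf] using h0
    have hsp : span ℝ B ≤ LinearMap.ker (ellmap w c) := span_le.mpr hker
    obtain ⟨x, hxS, rfl⟩ := hA haA
    have h0 : dotp w x + c = 0 := by
      have := hsp haB
      simpa [LinearMap.mem_ker, ell_Lf] using this
    exact ((hag x hxS).mpr haA) h0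

lemma upper_bound {n : ℕ} (hn : 2 ≤ n) (S : Finset (Fin n → ℝ))
    (hS : Shatters (strictEqSep n) S) : S.card ≤ 2 * n + 1 := by
  classical
  by_contra hcard
  push_neg at hcard
  set V : Set ((Fin n → ℝ) × ℝ) := Lf '' ↑S with hVdef
  have hAV : V = Lf '' ↑S := hVdef
  have hVfin : V.Finite := (S.finite_toSet).image _
  have hVcard : V.ncard = S.card := by
    rw [hVdef, Set.ncard_image_of_injective _ Lf_inj, Set.ncard_coe_finset]
  have hVcard' : 2 * n + 2 ≤ V.ncard := by omega
  have hfr : Module.finrank ℝ ((Fin n → ℝ) × ℝ) = n + 1 := by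
    rw [Module.finrank_prod, Module.finrank_fintype_fun_eq_card, Module.finrank_self,
      Fintype.card_fin]
  obtain ⟨B0, hB0V, hspanB0, hB0ind⟩ := exists_linearIndependent ℝ V
  have hB0fin : B0.Finite := hVfin.subset hB0V
  haveI := hB0fin.fintype
  have hB0card : B0.ncard ≤ n + 1 := by
    have h1 : Module.finrank ℝ (span ℝ B0) = B0.toFinset.card :=
      finrank_span_set_eq_card hB0ind
    have h2 : Module.finrank ℝ (span ℝ B0) ≤ n + 1 := hfr ▸ Submodule.finrank_le _
    rw [Set.ncard_eq_toFinset_card'] at *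
    omega
  have hA0card : n + 1 ≤ (V \ B0).ncard := by
    rw [Set.ncard_diff hB0V hB0fin]
    omega
  have hA0fin : (V \ B0).Finite := hVfin.subset Set.diff_subset
  have hA0ne : (V \ B0).Nonempty := by
    rw [← Set.ncard_pos hA0fin]; omega
  have hA0sub : V \ B0 ⊆ Lf '' ↑S := fun v hv => hAV ▸ hv.1
  have hB0sub : B0 ⊆ Lf '' ↑S := fun v hv => hAV ▸ hB0V hv
  by_cases hbs : ∃ b ∈ B0, b ∈ span ℝ (V \ B0)
  · obtain ⟨a, haA⟩ := hA0ne
    refine no_shatter S (V \ B0) B0 hA0sub hB0sub Set.disjoint_sdiff_left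
      ⟨a, haA, ?_⟩ hbs hS
    rw [hspanB0]
    exact subset_span haA.1
  · push_neg at hbs
    -- B0 is nonempty
    have hB0ne : B0.Nonempty := by
      rcases Set.eq_empty_or_nonempty B0 with he | hne
      · exfalso
        obtain ⟨v, hvV⟩ : V.Nonempty := by
          rw [← Set.ncard_pos hVfin]; omega
        have : v ∈ span ℝ B0 := hspanB0 ▸ subset_span hvV
        rw [he, span_empty, mem_bot] at this
        obtain ⟨x, _, rfl⟩ := hvV
        have : (Lf x).2 = (0 : ((Fin n → ℝ) × ℝ)).2 := congrArg Prod.snd this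
        simp [Lf] at this
      · exact hne
    -- span (V \ B0) is a proper subspace
    have hlt : span ℝ (V \ B0) < ⊤ := by
      rw [lt_top_iff_ne_top]
      intro htp
      obtain ⟨b0, hb0⟩ := hB0ne
      exact hbs b0 hb0 (htp ▸ mem_top)
    have hfrA0 : Module.finrank ℝ (span ℝ (V \ B0)) ≤ n := by
      have := Submodule.finrank_lt (K := ℝ) (V := (Fin n → ℝ) × ℝ) hlt.ne
      omega
    obtain ⟨t, htsub, htspan, htind⟩ := exists_linearIndependent ℝ (V \ B0)
    have htfin : t.Finite := hA0fin.subset htsub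
    haveI := htfin.fintype
    have htcard : t.ncard ≤ n := by
      have h1 : Module.finrank ℝ (span ℝ t) = t.toFinset.card :=
        finrank_span_set_eq_card htind
      rw [htspan] at h1
      rw [Set.ncard_eq_toFinset_card']
      omega
    have hss : t ⊂ V \ B0 := by
      refine ⟨htsub, fun hsub => ?_⟩
      have := Set.ncard_le_ncard hsub htfin
      omega
    obtain ⟨c, hcA0, hct⟩ := Set.exists_of_ssubset hss
    have hcspan : c ∈ span ℝ ((V \ B0) \ {c}) := by
      have h1 : c ∈ span ℝ (V \ B0) := subset_span hcA0
      rw [← htspan] at h1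
      refine span_mono ?_ h1
      intro y hy
      refine ⟨htsub hy, ?_⟩
      intro hyc
      rw [Set.mem_singleton_iff] at hyc
      subst hyc
      exact hct hy
    -- the two disjoint sets
    have hdisj : Disjoint ((V \ B0) \ {c}) (insert c B0) := by
      rw [Set.disjoint_left]
      rintro y ⟨hy1, hy2⟩ hyB
      rcases hyB with rfl | hyB0
      · exact hy2 rfl
      · exact hy1.2 hyB0
    have hAne : ((V \ B0) \ {c}).Nonempty := by
      have h1 : ((V \ B0) \ {c}).ncard = (V \ B0).ncard - 1 := by
        rw [Set.ncard_diff (Set.singleton_subset_iff.mpr hcA0) (Set.finite_singleton c), Set.ncard_singleton]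
      have h2 : ((V \ B0) \ {c}).Finite := hA0fin.subset Set.diff_subset
      rw [← Set.ncard_pos h2]
      omega
    obtain ⟨a, haA⟩ := hAne
    refine no_shatter S ((V \ B0) \ {c}) (insert c B0)
      (fun v hv => hA0sub hv.1)
      (by
        intro v hv
        rcases hv with rfl | hv
        · exact hA0sub hcA0
        · exact hB0sub hv)
      hdisj ⟨a, haA, ?_⟩ ⟨c, Set.mem_insert _ _, hcspan⟩ hS
    have h1 : a ∈ span ℝ B0 := hspanB0 ▸ subset_span haA.1.1
    exact span_mono (Set.subset_insert _ _) h1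

lemma poly_eval_eq {n : ℕ} (q : Polynomial ℝ) (hq : q.natDegree ≤ n) (t : ℝ) :
    dotp (fun i => q.coeff ((i : ℕ) + 1)) (fun i : Fin n => t ^ ((i : ℕ) + 1)) + q.coeff 0
      = q.eval t := by
  rw [Polynomial.eval_eq_sum_range' (Nat.lt_succ_of_le hq), Finset.sum_range_succ']
  simp only [dotp, pow_zero, mul_one]
  rw [Fin.sum_univ_eq_sum_range (fun i => q.coeff (i + 1) * t ^ (i + 1)) n]

lemma lower_bound {n : ℕ} (hn : 2 ≤ n) :
    ∃ S : Finset (Fin n → ℝ), S.card = 2 * n + 1 ∧ Shatters (strictEqSep n) S := by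
  classical
  set pt : Fin (2 * n + 1) → (Fin n → ℝ) := fun k i => ((k : ℕ) : ℝ) ^ ((i : ℕ) + 1) with hpt
  have hinj : Function.Injective pt := by
    intro a b hab
    have h0 : (0 : ℕ) < n := by omega
    have h1 : ((a : ℕ) : ℝ) = ((b : ℕ) : ℝ) := by
      simpa [hpt] using congrFun hab ⟨0, h0⟩
    exact Fin.ext (Nat.cast_injective (R := ℝ) h1)
  have key : ∀ A : Finset (Fin (2 * n + 1)), A.card ≤ n →
      ∃ w b, ∀ k, (dotp w (pt k) + b = 0 ↔ k ∈ A) := by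
    intro A hA
    set q : Polynomial ℝ := ∏ j ∈ A, (Polynomial.X - Polynomial.C ((j : ℕ) : ℝ)) with hq
    have hdeg : q.natDegree ≤ n := by
      rw [hq, Polynomial.natDegree_prod _ _ (fun j _ => Polynomial.X_sub_C_ne_zero _)]
      simp only [Polynomial.natDegree_X_sub_C, Finset.sum_const, smul_eq_mul, mul_one]
      exact hA
    refine ⟨fun i => q.coeff ((i : ℕ) + 1), q.coeff 0, fun k => ?_⟩
    have hev := poly_eval_eq q hdeg ((k : ℕ) : ℝ)
    have hpk : pt k = fun i : Fin n => (((k : ℕ) : ℝ)) ^ ((i : ℕ) + 1) := rfl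
    rw [hpk, hev, hq, Polynomial.eval_prod]
    simp only [Polynomial.eval_sub, Polynomial.eval_X, Polynomial.eval_C]
    rw [Finset.prod_eq_zero_iff]
    constructor
    · rintro ⟨j, hjA, hj⟩
      have : (k : ℕ) = (j : ℕ) := Nat.cast_injective (sub_eq_zero.mp hj)
      rwa [Fin.ext this]
    · intro hk
      exact ⟨k, hk, by simp⟩
  refine ⟨Finset.image pt Finset.univ, ?_, ?_⟩
  · rw [Finset.card_image_of_injective _ hinj, Finset.card_univ, Fintype.card_fin]
  · intro f
    set T : Finset (Fin (2 * n + 1)) := Finset.univ.filter (fun k => f (pt k)) with hT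
    by_cases hc : T.card ≤ n
    · obtain ⟨w, b, hwb⟩ := key T hc
      refine ⟨fun x => dotp w x + b = 0, ⟨w, b, Or.inl rfl⟩, ?_⟩
      intro x hx
      obtain ⟨k, _, rfl⟩ := Finset.mem_image.mp hx
      show (dotp w (pt k) + b = 0) ↔ f (pt k)
      rw [hwb k]
      simp [hT]
    · have hcc : Tᶜ.card ≤ n := by
        have h1 : Tᶜ.card = Fintype.card (Fin (2 * n + 1)) - T.card := Finset.card_compl T
        have h2 : T.card ≤ Fintype.card (Fin (2 * n + 1)) := Finset.card_le_univ T
        rw [Fintype.card_fin] at h1 h2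
        omega
      obtain ⟨w, b, hwb⟩ := key Tᶜ hcc
      refine ⟨fun x => dotp w x + b ≠ 0, ⟨w, b, Or.inr rfl⟩, ?_⟩
      intro x hx
      obtain ⟨k, _, rfl⟩ := Finset.mem_image.mp hx
      show ¬(dotp w (pt k) + b = 0) ↔ f (pt k)
      rw [hwb k]
      simp [hT]

/-- For `n ≥ 2`, the VC dimension of the strict equality separator class on ℝⁿ is
exactly `2n + 1`: some set of `2n + 1` points is shattered, and no shattered set
has more than `2n + 1` points. -/
theorem vc_dim_strict_equality_separators (n : ℕ) (hn : 2 ≤ n) :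
    (∃ S : Finset (Fin n → ℝ), S.card = 2 * n + 1 ∧ Shatters (strictEqSep n) S) ∧
    (∀ S : Finset (Fin n → ℝ), Shatters (strictEqSep n) S → S.card ≤ 2 * n + 1) := by
  exact ⟨lower_bound hn, fun S hS => upper_bound hn S hS⟩
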